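/- For every integer N ≥ 1, the product of Γ(r) over all rationals r in (0,1) with reduced denominator at most N equals (2π)^(|F_N|/2) · lcm(1,2,…,N)^(−1/2), where |F_N| = Σ_{n=2}^{N} φ(n). -/

import Mathlib

open Real Finset Polynomial

lemma abs_one_sub_exp (θ : ℝ) (h0 : 0 ≤ θ) (h1 : θ ≤ 2 * π) :
    ‖(1 - Complex.exp (θ * Complex.I))‖ = 2 * Real.sin (θ / 2) := by
  have h : (1 : ℂ) - Complex.exp (θ * Complex.I)
      = Complex.ofReal (1 - Real.cos θ) + Complex.ofReal (-Real.sin θ) * Complex.I := by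
    rw [Complex.exp_mul_I, ← Complex.ofReal_cos, ← Complex.ofReal_sin]
    push_cast
    ring
  have hs : 0 ≤ Real.sin (θ / 2) := by
    apply Real.sin_nonneg_of_nonneg_of_le_pi (by linarith)
    linarith
  rw [h, Complex.norm_add_mul_I]
  have key : (1 - Real.cos θ) ^ 2 + (-Real.sin θ) ^ 2 = (2 * Real.sin (θ / 2)) ^ 2 := by
    have h2 : Real.cos (2 * (θ / 2)) = Real.cos (θ / 2) ^ 2 - Real.sin (θ / 2) ^ 2 := Real.cos_two_mul' (θ / 2)
    have h2' : 2 * (θ / 2) = θ := by ring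
    rw [h2'] at h2
    have h3 := Real.sin_sq_add_cos_sq θ
    have h4 := Real.sin_sq_add_cos_sq (θ / 2)
    nlinarith
  rw [key, Real.sqrt_sq (by positivity)]

lemma prod_two_sin (n : ℕ) (hn : 2 ≤ n) :
    ∏ k ∈ (range n).filter (fun k => Nat.Coprime k n), (2 * Real.sin (π * k / n))
      = (((cyclotomic n ℤ).eval 1 : ℤ) : ℝ) := by
  have hn0 : n ≠ 0 := by omega
  have hnpos : (0:ℝ) < n := by positivity
  set ζ : ℂ := Complex.exp (2 * π * Complex.I / n) with hζdef
  have hζ : IsPrimitiveRoot ζ n := Complex.isPrimitiveRoot_exp n hn0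
  have hstep : (((cyclotomic n ℤ).eval 1 : ℤ) : ℂ)
      = ∏ k ∈ (range n).filter (fun k => Nat.Coprime k n), (1 - ζ ^ k) := by
    have hmap : (((cyclotomic n ℤ).eval 1 : ℤ) : ℂ) = (cyclotomic n ℂ).eval 1 := by
      rw [← map_cyclotomic_int n ℂ, Polynomial.eval_one_map]
      simp
    rw [hmap, cyclotomic_eq_prod_X_sub_primitiveRoots hζ, eval_prod]
    simp only [eval_sub, eval_X, eval_C]
    refine (Finset.prod_nbij (fun k => ζ ^ k) ?_ ?_ ?_ (fun k _ => rfl)).symm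
    · intro k hk
      rw [mem_filter, mem_range] at hk
      exact (mem_primitiveRoots (by omega)).2 (hζ.pow_of_coprime k hk.2)
    · intro a ha b hb hab
      simp only [Finset.coe_filter, Set.mem_setOf_eq, mem_range] at ha hb
      exact hζ.pow_inj ha.1 hb.1 hab
    · intro μ hμ
      simp only [Finset.coe_filter, Set.mem_setOf_eq, mem_range] at hμ ⊢
      have : NeZero n := ⟨hn0⟩
      have := (hζ.isPrimitiveRoot_iff.1 (isPrimitiveRoot_of_mem_primitiveRoots hμ))
      obtain ⟨i, hin, hic, hie⟩ := this
      exact ⟨i, ⟨hin, hic⟩, hie⟩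
  have habs := congrArg (‖·‖) hstep
  rw [norm_prod] at habs
  have hnonneg : (0:ℤ) ≤ (cyclotomic n ℤ).eval 1 := cyclotomic_nonneg n le_rfl
  rw [Complex.norm_intCast, abs_of_nonneg (show (0:ℝ) ≤ _ by exact_mod_cast hnonneg)] at habs
  rw [habs]
  apply Finset.prod_congr rfl
  intro k hk
  rw [mem_filter, mem_range] at hk
  have hζk : ζ ^ k = Complex.exp ((2 * π * k / n : ℝ) * Complex.I) := by
    rw [hζdef, ← Complex.exp_nat_mul]
    congr 1
    push_cast
    ring
  rw [hζk, abs_one_sub_exp]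
  · rw [show 2 * π * (k:ℝ) / n / 2 = π * k / n by ring]
  · positivity
  · rw [div_le_iff₀ hnpos]
    have : (k:ℝ) ≤ n := by exact_mod_cast hk.1.le
    nlinarith [Real.pi_pos]

example : GCDMonoid.lcm (4:ℕ) 6 = Nat.lcm 4 6 := rfl

lemma finset_lcm_ne_zero (s : Finset ℕ) (hs : ∀ n ∈ s, n ≠ 0) : s.lcm id ≠ 0 := by
  classical
  induction s using Finset.induction with
  | empty => simp
  | @insert a s' hx ih =>
    rw [Finset.lcm_insert]
    have ha := hs a (mem_insert_self a s')
    have hl := ih (fun n hn => hs n (mem_insert_of_mem hn))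
    exact Nat.lcm_ne_zero ha hl

lemma exists_dvd_of_pow_dvd_lcm {p : ℕ} (hp : p.Prime) {k : ℕ} (hk : 0 < k) (s : Finset ℕ)
        (hs : ∀ n ∈ s, n ≠ 0) : p ^ k ∣ s.lcm id → ∃ n ∈ s, p ^ k ∣ n := by
  classical
  induction s using Finset.induction with
  | empty =>
    intro hd
    exfalso
    simp only [Finset.lcm_empty, Nat.dvd_one] at hd
    have := Nat.one_lt_pow (show k ≠ 0 by omega) hp.one_lt
    omega
  | @insert a s' hx ih =>
    intro hd
    rw [Finset.lcm_insert] at hd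
    have ha := hs a (mem_insert_self a s')
    have hs' : ∀ n ∈ s', n ≠ 0 := fun n hn => hs n (mem_insert_of_mem hn)
    have hl := finset_lcm_ne_zero s' hs'
    have hd' : p ^ k ∣ Nat.lcm a (s'.lcm id) := hd
    rw [hp.pow_dvd_iff_le_factorization (Nat.lcm_ne_zero ha hl),
      Nat.factorization_lcm ha hl] at hd'
    simp only [Finsupp.sup_apply, le_sup_iff] at hd'
    rcases hd' with h | h
    · exact ⟨a, mem_insert_self a s', (hp.pow_dvd_iff_le_factorization ha).2 h⟩
    · obtain ⟨n, hn, hpn⟩ := ih hs' ((hp.pow_dvd_iff_le_factorization hl).2 h)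
      exact ⟨n, mem_insert_of_mem hn, hpn⟩

lemma lcm_icc_eq (N : ℕ) (hN : 1 ≤ N) :
    (((Finset.Icc 1 N).lcm id : ℕ) : ℤ) = ∏ n ∈ Finset.Icc 2 N, (cyclotomic n ℤ).eval 1 := by
  induction N, hN using Nat.le_induction with
  | base => simp
  | succ N hN ih =>
    have h1 : Finset.Icc 1 (N+1) = insert (N+1) (Finset.Icc 1 N) := by
      ext x; simp [Finset.mem_Icc, Finset.mem_insert]; omega
    have h2 : Finset.Icc 2 (N+1) = insert (N+1) (Finset.Icc 2 N) := by
      ext x; simp [Finset.mem_Icc, Finset.mem_insert]; omega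
    rw [h1, h2, Finset.lcm_insert, Finset.prod_insert (by simp)]
    set L : ℕ := (Finset.Icc 1 N).lcm id with hLdef
    have hLne : L ≠ 0 := finset_lcm_ne_zero _ (by intro n hn; rw [mem_Icc] at hn; omega)
    have hicc : ∀ n ∈ Finset.Icc 1 N, n ≠ 0 := by intro n hn; rw [mem_Icc] at hn; omega
    have hmem : ∀ m : ℕ, 1 ≤ m → m ≤ N → m ∣ L := fun m h1m h2m =>
      Finset.dvd_lcm (by rw [mem_Icc]; omega)
    show ((Nat.lcm (N+1) L : ℕ) : ℤ) = _
    by_cases hpp : IsPrimePow (N+1)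
    · obtain ⟨p, k, hp, hk, hpk⟩ := hpp
      have hp' : p.Prime := hp.nat_prime
      haveI : Fact p.Prime := ⟨hp'⟩
      obtain ⟨k, rfl⟩ : ∃ k', k = k' + 1 := ⟨k - 1, by omega⟩
      rw [← hpk, eval_one_cyclotomic_prime_pow]
      have hplt : p ^ k < p ^ (k + 1) := pow_lt_pow_right₀ hp'.one_lt (by omega)
      have hdvd : p ^ k ∣ L := hmem _ (Nat.one_le_pow _ _ hp'.pos) (by omega)
      have hndvd : ¬ p ^ (k+1) ∣ L := by
        intro h
        obtain ⟨n, hn, hpn⟩ := exists_dvd_of_pow_dvd_lcm hp' (by omega) _ hicc h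
        rw [mem_Icc] at hn
        have := Nat.le_of_dvd (by omega) hpn
        omega
      obtain ⟨m, hm⟩ := hdvd
      have hpm : ¬ p ∣ m := by
        intro hc
        obtain ⟨c, rfl⟩ := hc
        exact hndvd ⟨c, by rw [hm]; ring⟩
      have hlcm : Nat.lcm (p^(k+1)) L = p * L := by
        rw [hm, pow_succ, Nat.lcm_mul_left,
          Nat.Coprime.lcm_eq_mul ((hp'.coprime_iff_not_dvd).2 hpm)]
        ring
      rw [hlcm]
      push_cast
      rw [ih]
    · have heval : (cyclotomic (N+1) ℤ).eval 1 = 1 := by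
        apply eval_one_cyclotomic_not_prime_pow
        intro p hp k hpk
        rcases Nat.eq_zero_or_pos k with rfl | hk
        · rw [pow_zero] at hpk; omega
        · exact hpp ⟨p, k, hp.prime, hk, hpk⟩
      have hdvd : (N+1) ∣ L := by
        rw [Nat.dvd_iff_prime_pow_dvd_dvd]
        intro p k hp hpk
        rcases Nat.eq_zero_or_pos k with rfl | hk
        · simp only [pow_zero] at hpk ⊢; exact one_dvd _
        · have hle : p ^ k ≤ N + 1 := Nat.le_of_dvd (by omega) hpk
          have hne : p ^ k ≠ N + 1 := by
            intro hc
            exact hpp ⟨p, k, hp.prime, hk, hc⟩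
          exact hmem _ (Nat.one_le_pow _ _ hp.pos) (by omega)
      have hlcm : Nat.lcm (N+1) L = L :=
        Nat.dvd_antisymm (Nat.lcm_dvd hdvd dvd_rfl) (Nat.dvd_lcm_right _ _)
      rw [hlcm, heval, one_mul, ih]

def fset (N : ℕ) : Finset ℚ :=
  (Finset.Icc 2 N).biUnion fun n =>
    ((Finset.range n).filter fun k => Nat.Coprime k n).image fun k : ℕ => (k : ℚ) / n

lemma num_den_aux {n k : ℕ} (hn : 2 ≤ n) (hk : k < n) (hcop : Nat.Coprime k n) :
    ((k : ℚ) / n).num = k ∧ ((k : ℚ) / n).den = n := by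
  have hb : (0:ℤ) < (n:ℤ) := by exact_mod_cast (show 0 < n by omega)
  have hcop' : Nat.Coprime (k:ℤ).natAbs (n:ℤ).natAbs := by simpa using hcop
  have hcast : (k : ℚ) / n = ((k:ℤ) : ℚ) / ((n:ℤ) : ℚ) := by push_cast; ring
  constructor
  · rw [hcast, Rat.num_div_eq_of_coprime hb hcop']
  · have h2 := Rat.den_div_eq_of_coprime hb hcop'
    rw [← hcast] at h2
    exact_mod_cast h2

lemma inj_aux {n : ℕ} (hn : 2 ≤ n) : ∀ a ∈ (Finset.range n).filter (fun k => Nat.Coprime k n),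
    ∀ b ∈ (Finset.range n).filter (fun k => Nat.Coprime k n),
    ((a : ℕ) : ℚ) / n = ((b : ℕ) : ℚ) / n → a = b := by
  intro a ha b hb hab
  rw [mem_filter, mem_range] at ha hb
  have h1 := (num_den_aux hn ha.1 ha.2).1
  have h2 := (num_den_aux hn hb.1 hb.2).1
  rw [hab, h2] at h1
  exact_mod_cast h1.symm

lemma fset_disj (N : ℕ) : ∀ x ∈ Finset.Icc 2 N, ∀ y ∈ Finset.Icc 2 N, x ≠ y →
    Disjoint (((Finset.range x).filter fun k => Nat.Coprime k x).image fun k : ℕ => (k : ℚ) / x)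
      (((Finset.range y).filter fun k => Nat.Coprime k y).image fun k : ℕ => (k : ℚ) / y) := by
  intro x hx y hy hxy
  rw [mem_Icc] at hx hy
  rw [Finset.disjoint_left]
  intro r hr1 hr2
  rw [mem_image] at hr1 hr2
  obtain ⟨a, ha, rfl⟩ := hr1
  obtain ⟨b, hb, hba⟩ := hr2
  rw [mem_filter, mem_range] at ha hb
  have h1 := (num_den_aux hx.1 ha.1 ha.2).2
  have h2 := (num_den_aux hy.1 hb.1 hb.2).2
  rw [← hba, h2] at h1
  exact hxy h1.symm

lemma mem_fset {N : ℕ} {r : ℚ} : r ∈ fset N ↔ 0 < r ∧ r < 1 ∧ r.den ≤ N := by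
  constructor
  · intro hr
    rw [fset, mem_biUnion] at hr
    obtain ⟨n, hn, hr⟩ := hr
    rw [mem_Icc] at hn
    rw [mem_image] at hr
    obtain ⟨k, hk, rfl⟩ := hr
    rw [mem_filter, mem_range] at hk
    have hk0 : 0 < k := by
      rcases Nat.eq_zero_or_pos k with rfl | h
      · have := hk.2
        rw [Nat.coprime_zero_left] at this
        omega
      · exact h
    obtain ⟨hnum, hden⟩ := num_den_aux (by omega) hk.1 hk.2
    have hnq : (0:ℚ) < (n:ℚ) := by exact_mod_cast (show 0 < n by omega)
    have hkq : (0:ℚ) < (k:ℚ) := by exact_mod_cast hk0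
    refine ⟨by positivity, ?_, by rw [hden]; exact hn.2⟩
    rw [div_lt_one hnq]
    exact_mod_cast hk.1
  · rintro ⟨h0, h1, hNle⟩
    have hnum : 0 < r.num := Rat.num_pos.2 h0
    have hlt : r.num < (r.den : ℤ) := Rat.num_lt_denom_iff.2 h1
    have hden2 : 2 ≤ r.den := by
      by_contra h
      push_neg at h
      have := r.pos
      omega
    rw [fset, mem_biUnion]
    refine ⟨r.den, mem_Icc.2 ⟨hden2, hNle⟩, ?_⟩
    rw [mem_image]
    have habs : (r.num.natAbs : ℤ) = r.num := Int.natAbs_of_nonneg hnum.le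
    refine ⟨r.num.natAbs, ?_, ?_⟩
    · rw [mem_filter, mem_range]
      refine ⟨?_, r.reduced⟩
      have : (r.num.natAbs : ℤ) < (r.den : ℤ) := by rw [habs]; exact hlt
      exact_mod_cast this
    · have hc : ((r.num.natAbs : ℕ) : ℚ) = (r.num : ℚ) := by
        rw [Nat.cast_natAbs]
        exact_mod_cast congrArg (fun z : ℤ => (z : ℚ)) (abs_of_nonneg hnum.le)
      rw [hc, Rat.num_div_den]

lemma fset_card (N : ℕ) : (fset N).card = ∑ n ∈ Finset.Icc 2 N, n.totient := by
  rw [fset, Finset.card_biUnion (fset_disj N)]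
  apply Finset.sum_congr rfl
  intro n hn
  rw [mem_Icc] at hn
  rw [Finset.card_image_of_injOn (fun a ha b hb hab => inj_aux hn.1 a ha b hb hab)]
  rw [Nat.totient]
  congr 1
  apply Finset.filter_congr
  intro k _
  simp [Nat.coprime_comm]

theorem farey_gamma_prod' (N : ℕ) (hN : 1 ≤ N) :
    ∏ᶠ r ∈ {r : ℚ | 0 < r ∧ r < 1 ∧ r.den ≤ N}, Real.Gamma (r : ℝ) =
      (2 * π) ^ (((∑ n ∈ Finset.Icc 2 N, n.totient : ℕ) : ℝ) / 2) *
        (((Finset.Icc 1 N).lcm id : ℕ) : ℝ) ^ (-(1 : ℝ) / 2) := by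
  classical
  have hsetc : {r : ℚ | 0 < r ∧ r < 1 ∧ r.den ≤ N} = ↑(fset N) := by
    ext r
    simp [mem_fset]
  rw [hsetc, finprod_mem_coe_finset]
  set L : ℝ := (((Finset.Icc 1 N).lcm id : ℕ) : ℝ) with hLdef
  have hLpos : (0:ℝ) < L := by
    have h0 := finset_lcm_ne_zero (Finset.Icc 1 N)
      (by intro n hn; rw [mem_Icc] at hn; omega)
    rw [hLdef]
    exact_mod_cast Nat.pos_of_ne_zero h0
  set P : ℝ := ∏ r ∈ fset N, Real.Gamma (r : ℝ) with hPdef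
  have hrpos : ∀ r ∈ fset N, (0:ℝ) < (r:ℝ) ∧ (r:ℝ) < 1 := by
    intro r hr
    obtain ⟨h0, h1, _⟩ := mem_fset.1 hr
    exact ⟨by exact_mod_cast h0, by exact_mod_cast h1⟩
  have hPpos : 0 < P := Finset.prod_pos fun r hr => Real.Gamma_pos_of_pos (hrpos r hr).1
  have hsub : ∀ r ∈ fset N, 1 - r ∈ fset N := by
    intro r hr
    obtain ⟨h0, h1, hd⟩ := mem_fset.1 hr
    refine mem_fset.2 ⟨by linarith, by linarith, ?_⟩
    have hdvd : (1 - r).den ∣ r.den := by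
      have h := Rat.add_den_dvd 1 (-r)
      rw [← sub_eq_add_neg, Rat.den_neg_eq_den] at h
      simpa using h
    exact le_trans (Nat.le_of_dvd r.pos hdvd) hd
  have hinv : ∏ r ∈ fset N, Real.Gamma (1 - (r:ℝ)) = P := by
    rw [hPdef]
    refine Finset.prod_nbij' (fun r => 1 - r) (fun r => 1 - r) hsub hsub
      (fun r _ => by ring) (fun r _ => by ring) ?_
    intro r _
    push_cast
    ring_nf
  have hP2 : P ^ 2 = ∏ r ∈ fset N, (π / Real.sin (π * r)) := by
    calc P ^ 2 = P * P := sq P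
    _ = (∏ r ∈ fset N, Real.Gamma (r:ℝ)) * ∏ r ∈ fset N, Real.Gamma (1 - (r:ℝ)) := by
        rw [hinv, hPdef]
    _ = ∏ r ∈ fset N, (Real.Gamma (r:ℝ) * Real.Gamma (1 - (r:ℝ))) :=
        (Finset.prod_mul_distrib).symm
    _ = ∏ r ∈ fset N, (π / Real.sin (π * r)) := by
        apply Finset.prod_congr rfl
        intro r _
        exact Real.Gamma_mul_Gamma_one_sub (r:ℝ)
  have hsin : ∏ r ∈ fset N, (2 * Real.sin (π * r)) = L := by
    rw [fset, Finset.prod_biUnion]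
    swap
    · intro x hx y hy hxy
      exact fset_disj N x hx y hy hxy
    have hstep : ∀ n ∈ Finset.Icc 2 N,
        (∏ r ∈ ((Finset.range n).filter fun k => Nat.Coprime k n).image (fun k : ℕ => (k:ℚ)/n),
          (2 * Real.sin (π * r))) = (((cyclotomic n ℤ).eval 1 : ℤ) : ℝ) := by
      intro n hn
      rw [mem_Icc] at hn
      rw [Finset.prod_image (inj_aux hn.1), ← prod_two_sin n hn.1]
      apply Finset.prod_congr rfl
      intro k _
      congr 1
      push_cast
      ring
    rw [Finset.prod_congr rfl hstep, hLdef]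
    have hlcm := lcm_icc_eq N hN
    have : (((Finset.Icc 1 N).lcm id : ℕ) : ℝ)
        = ((∏ n ∈ Finset.Icc 2 N, (cyclotomic n ℤ).eval 1 : ℤ) : ℝ) := by
      rw [← hlcm]
      push_cast
      ring
    rw [this, Int.cast_prod]
  have hsinpos : ∀ r ∈ fset N, 0 < Real.sin (π * (r:ℝ)) := by
    intro r hr
    obtain ⟨h0, h1⟩ := hrpos r hr
    apply Real.sin_pos_of_pos_of_lt_pi
    · positivity
    · nlinarith [Real.pi_pos]
  have hP2' : P ^ 2 = (2*π) ^ (fset N).card / L := by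
    rw [hP2]
    have hfac : ∀ r ∈ fset N, π / Real.sin (π * (r:ℝ))
        = (2*π) / (2 * Real.sin (π * (r:ℝ))) := by
      intro r _
      rw [mul_div_mul_left _ _ (two_ne_zero)]
    rw [Finset.prod_congr rfl hfac, Finset.prod_div_distrib, Finset.prod_const, hsin]
  -- now handle RHS
  set t : ℝ := ((∑ n ∈ Finset.Icc 2 N, n.totient : ℕ) : ℝ) with htdef
  have h2π : (0:ℝ) ≤ 2 * π := by positivity
  have hR2 : ((2 * π) ^ (t / 2) * L ^ (-(1:ℝ) / 2)) ^ 2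
      = (2*π) ^ (fset N).card / L := by
    rw [mul_pow, ← Real.rpow_natCast ((2*π) ^ (t/2)) 2, ← Real.rpow_natCast (L ^ (-(1:ℝ)/2)) 2,
      ← Real.rpow_mul h2π, ← Real.rpow_mul hLpos.le]
    push_cast
    rw [div_mul_cancel₀ _ (two_ne_zero), div_mul_cancel₀ _ (two_ne_zero)]
    rw [Real.rpow_neg_one, htdef]
    rw [Real.rpow_natCast, ← fset_card N]
    rw [div_eq_mul_inv]
  have hRpos : (0:ℝ) ≤ (2 * π) ^ (t / 2) * L ^ (-(1:ℝ) / 2) := by positivity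
  calc P = Real.sqrt (P ^ 2) := (Real.sqrt_sq hPpos.le).symm
  _ = Real.sqrt (((2 * π) ^ (t / 2) * L ^ (-(1:ℝ) / 2)) ^ 2) := by rw [hP2', hR2]
  _ = (2 * π) ^ (t / 2) * L ^ (-(1:ℝ) / 2) := Real.sqrt_sq hRpos
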